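/- arXiv:2604.02723 — 4 statements merged into one kernel-verified Lean document; each statement's English description precedes it below -/
import Mathlib

section
/- Euler's integral representation for the Gauss hypergeometric series: if Re(c) > Re(b) > 0, then ₂F₁(a, b; c; z) = [Γ(c)/(Γ(b)Γ(c-b))] ∫₀¹ t^{b-1} (1-t)^{c-b-1} (1 - zt)^{-a} dt for all real z with |z| < 1. -/
open Complex MeasureTheory Filter Set

lemma norm_ascPochhammer_le (a : ℂ) {M : ℝ} (hM : ‖a‖ ≤ M) (k : ℕ) :
    ‖(ascPochhammer ℂ k).eval a‖ ≤ (ascPochhammer ℝ k).eval M := by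
  have hM0 : 0 ≤ M := le_trans (norm_nonneg a) hM
  induction k with
  | zero => simp
  | succ n ih =>
    rw [ascPochhammer_succ_eval, ascPochhammer_succ_eval, norm_mul]
    have h1 : ‖a + (n : ℂ)‖ ≤ M + n := by
      calc ‖a + (n : ℂ)‖ ≤ ‖a‖ + ‖(n : ℂ)‖ := norm_add_le _ _
        _ ≤ M + n := by simp only [Complex.norm_natCast]; exact add_le_add hM le_rfl
    have h2 : (0:ℝ) ≤ (ascPochhammer ℝ n).eval M := by
      rcases eq_or_lt_of_le hM0 with h|h
      · rcases Nat.eq_zero_or_pos n with rfl|hn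
        · simp
        · rw [← h]; simp [ascPochhammer_eval_zero, Nat.pos_iff_ne_zero.mp hn]
      · exact (ascPochhammer_pos n M h).le
    exact mul_le_mul ih h1 (norm_nonneg _) h2

lemma master_summable {M : ℝ} (hM : 0 < M) {r : ℝ} (h0 : 0 < r) (h1 : r < 1) :
    Summable fun k : ℕ => (ascPochhammer ℝ k).eval M * (k + 1) * r ^ k / k.factorial := by
  set f : ℕ → ℝ := fun k => (ascPochhammer ℝ k).eval M * (k + 1) * r ^ k / k.factorial with hf
  have hpos : ∀ k, 0 < f k := by
    intro k
    have := ascPochhammer_pos k M hM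
    positivity
  apply summable_of_ratio_test_tendsto_lt_one h1 (Eventually.of_forall fun n => (hpos n).ne')
  have heq : ∀ k : ℕ, ‖f (k + 1)‖ / ‖f k‖ =
      r * ((M - 1) / (k + 1) + 1) * ((1 : ℝ) / (k + 1) + 1) := by
    intro k
    rw [Real.norm_of_nonneg (hpos (k+1)).le, Real.norm_of_nonneg (hpos k).le, hf]
    have hP : (0:ℝ) < (ascPochhammer ℝ k).eval M := ascPochhammer_pos k M hM
    have hfac : (0:ℝ) < (k.factorial : ℝ) := by positivity
    have hk1 : (0:ℝ) < (k:ℝ) + 1 := by positivity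
    simp only [ascPochhammer_succ_eval]
    push_cast [Nat.factorial_succ]
    field_simp
    ring
  rw [tendsto_congr heq]
  have hd : ∀ C : ℝ, Tendsto (fun k : ℕ => C / ((k : ℝ) + 1) + 1) atTop (nhds 1) := by
    intro C
    have : Tendsto (fun k : ℕ => C / ((k : ℝ) + 1)) atTop (nhds 0) := by
      have := (tendsto_const_div_atTop_nhds_zero_nat C).comp (tendsto_add_atTop_nat 1)
      refine this.congr fun n => by simp [Function.comp]
    simpa using this.add tendsto_const_nhds
  have := ((tendsto_const_nhds (x := r)).mul (hd (M - 1))).mul (hd 1)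
  simpa using this

lemma poch_summable_aux (a : ℂ) {r : ℝ} (hr0 : 0 ≤ r) (hr : r < 1) :
    Summable fun k : ℕ => ‖(ascPochhammer ℂ k).eval a‖ * r ^ k / k.factorial := by
  rcases eq_or_lt_of_le hr0 with h0 | hpos
  · apply summable_of_ne_finset_zero (s := {0})
    intro k hk
    have hk0 : k ≠ 0 := by simpa using hk
    have : r ^ k = 0 := by rw [← h0]; exact zero_pow hk0
    simp [this]
  · set M : ℝ := ‖a‖ + 1 with hMdef
    have hM : 0 < M := by positivity
    refine Summable.of_nonneg_of_le (fun k => by positivity) (fun k => ?_)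
      (master_summable hM hpos hr)
    have h1 : ‖(ascPochhammer ℂ k).eval a‖ ≤ (ascPochhammer ℝ k).eval M :=
      norm_ascPochhammer_le a (by simp [hMdef]) k
    have h2 : (ascPochhammer ℝ k).eval M ≤ (ascPochhammer ℝ k).eval M * (k + 1) := by
      nlinarith [(ascPochhammer_pos k M hM), (Nat.cast_nonneg (α := ℝ) k)]
    have hrk : (0:ℝ) ≤ r ^ k := by positivity
    have hfac : (0:ℝ) < (k.factorial : ℝ) := by positivity
    have : ‖(ascPochhammer ℂ k).eval a‖ * r ^ k ≤
        (ascPochhammer ℝ k).eval M * (k + 1) * r ^ k :=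
      mul_le_mul_of_nonneg_right (h1.trans h2) hrk
    exact div_le_div_of_nonneg_right this hfac.le

set_option maxHeartbeats 1600000 in
lemma binomial_hasSum (a : ℂ) {x : ℝ} (hx : |x| < 1) :
    HasSum (fun k : ℕ => (ascPochhammer ℂ k).eval a * (x:ℂ) ^ k / k.factorial)
      (((1 : ℂ) - (x:ℂ)) ^ (-a)) := by
  set r : ℝ := (|x| + 1) / 2 with hrdef
  have hr0 : 0 < r := by positivity
  have hr1 : r < 1 := by simp only [hrdef]; linarith
  have hxr : |x| < r := by simp only [hrdef]; linarith
  set s : Set ℝ := Ioo (-r) r with hsdef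
  have hs_open : IsOpen s := isOpen_Ioo
  have hs_conn : IsPreconnected s := (convex_Ioo _ _).isPreconnected
  have h0s : (0:ℝ) ∈ s := by constructor <;> simp [hr0] <;> linarith
  have hxs : x ∈ s := abs_lt.mp hxr |> fun h => ⟨h.1, h.2⟩
  set g : ℕ → ℝ → ℂ := fun n y => (ascPochhammer ℂ n).eval a * (y:ℂ) ^ n / n.factorial with hgdef
  set g' : ℕ → ℝ → ℂ :=
    fun n y => (ascPochhammer ℂ n).eval a * ((n:ℂ) * (y:ℂ) ^ (n - 1)) / n.factorial with hg'def
  set u : ℕ → ℝ := fun n => ‖(ascPochhammer ℂ n).eval a‖ * (n * r ^ (n - 1)) / n.factorial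
    with hudef
  have hu : Summable u := by
    set M : ℝ := ‖a‖ + 1 with hMdef
    have hM : 0 < M := by positivity
    refine Summable.of_nonneg_of_le (fun k => by positivity) (fun k => ?_)
      (((master_summable hM hr0 hr1).mul_left (1/r)))
    have h1 : ‖(ascPochhammer ℂ k).eval a‖ ≤ (ascPochhammer ℝ k).eval M :=
      norm_ascPochhammer_le a (by simp [hMdef]) k
    have hP : (0:ℝ) < (ascPochhammer ℝ k).eval M := ascPochhammer_pos k M hM
    have hfac : (0:ℝ) < (k.factorial : ℝ) := by positivity
    have key : (k : ℝ) * r ^ (k - 1) ≤ (k + 1) * r ^ k / r := by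
      cases k with
      | zero => simp; positivity
      | succ m =>
        have h2 : r ^ (m+1) / r = r ^ m := by
          rw [pow_succ]; field_simp
        push_cast [Nat.add_sub_cancel]
        rw [mul_div_assoc, h2]
        have : (0:ℝ) ≤ r ^ m := by positivity
        nlinarith
    calc u k = ‖(ascPochhammer ℂ k).eval a‖ * ((k:ℝ) * r ^ (k - 1)) / k.factorial := rfl
      _ ≤ (ascPochhammer ℝ k).eval M * ((k + 1) * r ^ k / r) / k.factorial := by
          apply div_le_div_of_nonneg_right _ hfac.le
          exact mul_le_mul h1 key (by positivity) hP.le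
      _ = 1 / r * ((ascPochhammer ℝ k).eval M * (k + 1) * r ^ k / k.factorial) := by
          field_simp
  have hgderiv : ∀ n y, HasDerivAt (g n) (g' n y) y := by
    intro n y
    have h1 : HasDerivAt (fun y : ℝ => (y:ℂ) ^ n) ((n:ℂ) * (y:ℂ) ^ (n - 1)) y :=
      (hasDerivAt_pow n ((y:ℝ):ℂ)).comp_ofReal
    simpa [hgdef, hg'def, mul_div_assoc, mul_assoc] using (h1.const_mul ((ascPochhammer ℂ n).eval a)).div_const (n.factorial : ℂ)
  have hg'bound : ∀ n y, y ∈ s → ‖g' n y‖ ≤ u n := by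
    intro n y hy
    have hyr : |y| ≤ r := le_of_lt (abs_lt.mpr ⟨hy.1, hy.2⟩)
    simp only [hg'def, hudef, norm_div, norm_mul, Complex.norm_natCast, norm_pow,
      Complex.norm_real, Real.norm_eq_abs, Nat.abs_cast]
    gcongr
  have hg0 : Summable fun n => g n 0 := by
    apply summable_of_ne_finset_zero (s := {0})
    intro k hk
    have hk0 : k ≠ 0 := by simpa using hk
    simp [hgdef, zero_pow hk0]
  set f : ℝ → ℂ := fun y => ∑' n, g n y with hfdef
  have hkey : ∀ y ∈ s, HasDerivAt f (∑' n, g' n y) y := fun y hy =>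
    hasDerivAt_tsum_of_isPreconnected hu hs_open hs_conn (fun n y _ => hgderiv n y)
      (fun n y hy => hg'bound n y hy) h0s hg0 hy
  -- summability of g and g' at points of s
  have habs : ∀ y, y ∈ s → Summable fun n => g n y := by
    intro y hy
    have hyr : |y| ≤ r := le_of_lt (abs_lt.mpr ⟨hy.1, hy.2⟩)
    apply Summable.of_norm
    refine Summable.of_nonneg_of_le (fun n => norm_nonneg _) (fun n => ?_)
      (poch_summable_aux a hr0.le hr1)
    simp only [hgdef, norm_div, norm_mul, norm_pow, Complex.norm_real, Real.norm_eq_abs,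
      Complex.norm_natCast, Nat.abs_cast]
    gcongr
  have habs' : ∀ y, y ∈ s → Summable fun n => g' n y := by
    intro y hy
    apply Summable.of_norm
    exact Summable.of_nonneg_of_le (fun n => norm_nonneg _)
      (fun n => hg'bound n y hy) hu
  -- the ODE : (1 - y) * f' = a * f on s
  have hODE : ∀ y, y ∈ s → ((1:ℂ) - (y:ℂ)) * (∑' n, g' n y) = a * f y := by
    intro y hy
    have hA : HasSum (fun n => g' n y) (∑' n, g' n y) := (habs' y hy).hasSum
    set A : ℂ := ∑' n, g' n y with hAdef
    have hg'0 : g' 0 y = 0 := by simp [hg'def]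
    have hshift : HasSum (fun m => g' (m+1) y) A := by
      have h := (hasSum_nat_add_iff' (f := fun n => g' n y) 1).mpr hA
      simpa [hg'0] using h
    have hterm : ∀ m : ℕ, g' (m+1) y =
        (ascPochhammer ℂ (m+1)).eval a * (y:ℂ) ^ m / m.factorial := by
      intro m
      have hfac : ((m+1).factorial : ℂ) = (m+1) * m.factorial := by
        push_cast [Nat.factorial_succ]; ring
      have hne : ((m:ℂ) + 1) ≠ 0 := by
        have h := Nat.cast_ne_zero (R := ℂ).mpr (Nat.succ_ne_zero m)
        push_cast at h
        exact h
      simp only [hg'def, Nat.add_sub_cancel, hfac]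
      push_cast
      have hfacne : ((m.factorial : ℂ)) ≠ 0 := Nat.cast_ne_zero.mpr m.factorial_ne_zero
      field_simp
    have hshift' : HasSum (fun m => (ascPochhammer ℂ (m+1)).eval a * (y:ℂ) ^ m / m.factorial) A := by
      rwa [funext hterm] at hshift
    have hmul : HasSum (fun m => (ascPochhammer ℂ (m+1)).eval a * (y:ℂ) ^ (m+1) / m.factorial)
        ((y:ℂ) * A) := by
      have h := hshift'.mul_left (y:ℂ)
      have heq : (fun m : ℕ => (y:ℂ) * ((ascPochhammer ℂ (m+1)).eval a * (y:ℂ) ^ m / m.factorial))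
          = fun m : ℕ => (ascPochhammer ℂ (m+1)).eval a * (y:ℂ) ^ (m+1) / m.factorial := by
        funext m; ring
      rwa [heq] at h
    set F : ℕ → ℂ := fun n => (n:ℂ) * ((ascPochhammer ℂ n).eval a * (y:ℂ) ^ n / n.factorial)
      with hFdef
    have hF : HasSum F ((y:ℂ) * A) := by
      have hFshift : HasSum (fun n => F (n+1)) ((y:ℂ) * A - ∑ i ∈ Finset.range 1, F i) := by
        have heq : (fun m : ℕ => (ascPochhammer ℂ (m+1)).eval a * (y:ℂ) ^ (m+1) / m.factorial)
            = fun n : ℕ => F (n+1) := by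
          funext m
          have hfac : (((m+1).factorial : ℕ) : ℂ) = ((m:ℂ)+1) * m.factorial := by
            push_cast [Nat.factorial_succ]; ring
          have hfacne : ((m.factorial : ℂ)) ≠ 0 := Nat.cast_ne_zero.mpr m.factorial_ne_zero
          have hne : ((m:ℂ) + 1) ≠ 0 := by
            have h := Nat.cast_ne_zero (R := ℂ).mpr (Nat.succ_ne_zero m)
            push_cast at h
            exact h
          simp only [hFdef, hfac]
          push_cast
          field_simp
        have h := hmul
        rw [heq] at h
        simpa [hFdef] using h
      exact (hasSum_nat_add_iff' 1).mp hFshift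
    have hsub := hshift'.sub hF
    have hfinal : HasSum (fun n => a * g n y) (A - (y:ℂ) * A) := by
      have heq : (fun n : ℕ => (ascPochhammer ℂ (n+1)).eval a * (y:ℂ) ^ n / n.factorial - F n)
          = fun n => a * g n y := by
        funext n
        rw [ascPochhammer_succ_eval]
        simp only [hFdef, hgdef]
        ring
      rwa [heq] at hsub
    have hgf : HasSum (fun n => a * g n y) (a * f y) := (habs y hy).hasSum.mul_left a
    have := hgf.unique hfinal
    rw [this]; ring
  -- H = f * (1-y)^a is constant on s
  set H : ℝ → ℂ := fun y => f y * ((1:ℂ) - (y:ℂ)) ^ a with hHdef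
  have hsub1 : ∀ y ∈ s, (y:ℝ) < 1 := fun y hy => lt_of_lt_of_le hy.2 hr1.le
  have hHderiv : ∀ y ∈ s, HasDerivAt H 0 y := by
    intro y hy
    have hy1 : (y:ℝ) < 1 := hsub1 y hy
    have hmem : ((1:ℂ) - (y:ℂ)) ∈ Complex.slitPlane := by
      refine Complex.mem_slitPlane_iff.mpr (Or.inl ?_)
      simp only [Complex.sub_re, Complex.one_re, Complex.ofReal_re]
      linarith
    have hne : ((1:ℂ) - (y:ℂ)) ≠ 0 := Complex.slitPlane_ne_zero hmem
    have hbase : HasDerivAt (fun w : ℂ => ((1:ℂ) - w) ^ a)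
        (a * ((1:ℂ) - (y:ℂ)) ^ (a-1) * (-1)) ((y:ℝ):ℂ) := by
      have hid : HasDerivAt (fun w : ℂ => (1:ℂ) - w) (-1) ((y:ℝ):ℂ) :=
        (hasDerivAt_id _).const_sub 1
      exact hid.cpow_const hmem
    have hG : HasDerivAt (fun t : ℝ => ((1:ℂ) - (t:ℂ)) ^ a)
        (a * ((1:ℂ) - (y:ℂ)) ^ (a-1) * (-1)) y := hbase.comp_ofReal
    have hprod := (hkey y hy).mul hG
    have hsplit : ((1:ℂ) - (y:ℂ)) ^ a = ((1:ℂ) - (y:ℂ)) ^ (a-1) * ((1:ℂ) - (y:ℂ)) := by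
      calc ((1:ℂ) - (y:ℂ)) ^ a = ((1:ℂ) - (y:ℂ)) ^ (a - 1 + 1) := by ring_nf
        _ = ((1:ℂ) - (y:ℂ)) ^ (a-1) * ((1:ℂ) - (y:ℂ)) ^ (1:ℂ) := Complex.cpow_add _ _ hne
        _ = ((1:ℂ) - (y:ℂ)) ^ (a-1) * ((1:ℂ) - (y:ℂ)) := by rw [Complex.cpow_one]
    have h0 : (∑' n, g' n y) * ((1:ℂ) - (y:ℂ)) ^ a
        + f y * (a * ((1:ℂ) - (y:ℂ)) ^ (a-1) * (-1)) = 0 := by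
      rw [hsplit]
      linear_combination (((1:ℂ) - (y:ℂ)) ^ (a-1)) * (hODE y hy)
    rw [← h0]
    exact hprod
  have hconst : H x = H 0 := by
    have hdiff : DifferentiableOn ℝ H s := fun y hy =>
      ((hHderiv y hy).differentiableAt).differentiableWithinAt
    have hs_conv : Convex ℝ s := hsdef ▸ convex_Ioo (-r) r
    refine hs_conv.is_const_of_fderivWithin_eq_zero hdiff (fun y hy => ?_) hxs h0s
    have h1 : fderivWithin ℝ H s y = fderiv ℝ H y := fderivWithin_of_isOpen hs_open hy
    rw [h1, (hHderiv y hy).hasFDerivAt.fderiv]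
    exact ContinuousLinearMap.ext fun t => by simp
  have hf0 : f 0 = 1 := by
    have h1 : ∀ n : ℕ, n ≠ 0 → g n (0:ℝ) = 0 := by
      intro n hn
      simp [hgdef, zero_pow hn]
    have := tsum_eq_single (L := SummationFilter.unconditional ℕ) (f := fun n => g n (0:ℝ)) 0 (fun n hn => h1 n hn)
    rw [hfdef]
    simp only
    rw [this]
    simp [hgdef]
  have hH0 : H 0 = 1 := by
    simp only [hHdef, Complex.ofReal_zero, sub_zero, Complex.one_cpow, hf0, mul_one]
  have hnex : ((1:ℂ) - (x:ℂ)) ≠ 0 := by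
    have hx1 : x < 1 := lt_of_le_of_lt (le_abs_self x) hx
    intro h
    have := congrArg Complex.re h
    simp only [Complex.sub_re, Complex.one_re, Complex.ofReal_re, Complex.zero_re] at this
    linarith
  have hfx : f x = ((1:ℂ) - (x:ℂ)) ^ (-a) := by
    have h1 : f x * ((1:ℂ) - (x:ℂ)) ^ a = 1 := hconst.trans hH0
    rw [Complex.cpow_neg]
    exact eq_inv_of_mul_eq_one_left (by linear_combination h1)
  have hs2 := (habs x hxs).hasSum
  rw [show (∑' n, g n x) = f x from rfl, hfx] at hs2
  exact hs2

lemma Gamma_add_nat' (s : ℂ) (hs : 0 < s.re) (k : ℕ) :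
    Complex.Gamma (s + k) = (ascPochhammer ℂ k).eval s * Complex.Gamma s := by
  induction k with
  | zero => simp
  | succ n ih =>
    have hne : s + (n:ℂ) ≠ 0 := by
      intro h
      have h2 := congrArg Complex.re h
      simp only [Complex.add_re, Complex.natCast_re, Complex.zero_re] at h2
      have h3 : (0:ℝ) ≤ (n:ℝ) := Nat.cast_nonneg n
      linarith
    have h1 : s + ((n+1 : ℕ):ℂ) = (s + n) + 1 := by push_cast; ring
    rw [h1, Complex.Gamma_add_one _ hne, ih, ascPochhammer_succ_eval]
    ring

set_option maxHeartbeats 1600000 in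
/-- Euler's integral representation of the Gauss hypergeometric series: if
`Re c > Re b > 0` and `c` is not a nonpositive integer, then for real `z` with `|z| < 1`,
`₂F₁(a, b; c; z) = Γ(c)/(Γ(b)Γ(c-b)) ∫₀¹ t^(b-1) (1-t)^(c-b-1) (1 - z t)^(-a) dt`. -/
theorem euler_integral_representation (a b c : ℂ)
    (hbc : b.re < c.re) (hb : 0 < b.re) (hc : ∀ n : ℕ, c ≠ -n)
    (z : ℝ) (hz : |z| < 1) :
    (∑' k : ℕ, (ascPochhammer ℂ k).eval a * (ascPochhammer ℂ k).eval b /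
        ((ascPochhammer ℂ k).eval c * (k.factorial : ℂ)) * (z : ℂ) ^ k) =
      Complex.Gamma c / (Complex.Gamma b * Complex.Gamma (c - b)) *
        ∫ t in (0:ℝ)..1, (t : ℂ) ^ (b - 1) * ((1 : ℂ) - t) ^ (c - b - 1) *
          ((1 : ℂ) - z * t) ^ (-a) := by
  have hcb : 0 < (c - b).re := by
    simp only [Complex.sub_re]; linarith
  have hc0 : 0 < c.re := lt_trans hb hbc
  set F : ℕ → ℝ → ℂ := fun k t =>
    (ascPochhammer ℂ k).eval a / k.factorial * (z:ℂ) ^ k *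
      ((t:ℂ) ^ (b + k - 1) * ((1:ℂ) - (t:ℂ)) ^ (c - b - 1)) with hFdef
  -- integrability of beta-type integrands
  have hbeta : ∀ u : ℂ, 0 < u.re → IntegrableOn
      (fun t : ℝ => (t:ℂ) ^ (u - 1) * ((1:ℂ) - (t:ℂ)) ^ (c - b - 1)) (Ioo 0 1) volume := by
    intro u hu
    have h := Complex.betaIntegral_convergent hu hcb
    rw [intervalIntegrable_iff_integrableOn_Ioc_of_le zero_le_one] at h
    exact h.mono_set Ioo_subset_Ioc_self
  have hrebk : ∀ k : ℕ, 0 < (b + (k:ℂ)).re := by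
    intro k
    simp only [Complex.add_re, Complex.natCast_re]
    positivity
  have hFint : ∀ k, IntegrableOn (F k) (Ioo 0 1) volume := by
    intro k
    have h := (hbeta (b + k) (hrebk k)).const_mul
      ((ascPochhammer ℂ k).eval a / k.factorial * (z:ℂ) ^ k)
    exact h
  -- splitting the power
  have hsplit : ∀ (k : ℕ) (t : ℝ), 0 < t →
      (t:ℂ) ^ (b + k - 1) = (t:ℂ) ^ (b - 1) * (t:ℂ) ^ (k:ℕ) := by
    intro k t ht0
    have htne : (t:ℂ) ≠ 0 := Complex.ofReal_ne_zero.mpr (ne_of_gt ht0)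
    rw [← Complex.cpow_natCast, ← Complex.cpow_add _ _ htne]
    ring_nf
  -- majorant
  set Gm : ℝ → ℝ := fun t => ‖(t:ℂ) ^ (b - 1) * ((1:ℂ) - (t:ℂ)) ^ (c - b - 1)‖ with hGmdef
  have hGmint : IntegrableOn Gm (Ioo 0 1) volume := (hbeta b hb).norm
  set D : ℕ → ℝ := fun k => ‖(ascPochhammer ℂ k).eval a‖ * |z| ^ k / k.factorial with hDdef
  have hDsum : Summable D := poch_summable_aux a (abs_nonneg z) hz
  have hptbound : ∀ k, ∀ t ∈ Ioo (0:ℝ) 1, ‖F k t‖ ≤ D k * Gm t := by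
    intro k t ht
    obtain ⟨ht0, ht1⟩ := ht
    have hnorm : ‖F k t‖ = D k * Gm t * t ^ k := by
      simp only [hFdef, hGmdef, hDdef, norm_mul, norm_div, Complex.norm_natCast, norm_pow,
        hsplit k t ht0, Complex.norm_real, Real.norm_eq_abs]
      rw [abs_of_pos ht0]
      ring
    have htk : t ^ k ≤ 1 := pow_le_one₀ ht0.le ht1.le
    have hDG : 0 ≤ D k * Gm t := by
      have : 0 ≤ D k := by rw [hDdef]; positivity
      have : 0 ≤ Gm t := norm_nonneg _
      positivity
    calc ‖F k t‖ = D k * Gm t * t ^ k := hnorm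
      _ ≤ D k * Gm t * 1 := mul_le_mul_of_nonneg_left htk hDG
      _ = D k * Gm t := mul_one _
  have hnormint : ∀ k, (∫ t in Ioo (0:ℝ) 1, ‖F k t‖) ≤ D k * ∫ t in Ioo (0:ℝ) 1, Gm t := by
    intro k
    have h := setIntegral_mono_on ((hFint k).norm) (hGmint.const_mul (D k)) measurableSet_Ioo
      (fun t ht => hptbound k t ht)
    rwa [MeasureTheory.integral_const_mul] at h
  have hsumint : Summable fun k => ∫ t in Ioo (0:ℝ) 1, ‖F k t‖ :=
    Summable.of_nonneg_of_le (fun k => integral_nonneg fun t => norm_nonneg _)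
      hnormint (hDsum.mul_right _)
  have hhs := MeasureTheory.hasSum_integral_of_summable_integral_norm
      (μ := volume.restrict (Ioo (0:ℝ) 1)) (F := F) hFint hsumint
  -- pointwise identification of the sum
  have hpt : ∀ t ∈ Ioo (0:ℝ) 1, (∑' k, F k t) =
      (t:ℂ) ^ (b - 1) * ((1:ℂ) - (t:ℂ)) ^ (c - b - 1) * ((1:ℂ) - (z:ℂ) * (t:ℂ)) ^ (-a) := by
    intro t ht
    obtain ⟨ht0, ht1⟩ := ht
    have hzt : |z * t| < 1 := by
      rw [abs_mul, abs_of_pos ht0]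
      calc |z| * t ≤ |z| * 1 := mul_le_mul_of_nonneg_left ht1.le (abs_nonneg z)
        _ = |z| := mul_one _
        _ < 1 := hz
    have hbs := binomial_hasSum a hzt
    have hmul := hbs.mul_left ((t:ℂ) ^ (b - 1) * ((1:ℂ) - (t:ℂ)) ^ (c - b - 1))
    have heq : (fun k : ℕ => ((t:ℂ) ^ (b-1) * ((1:ℂ) - (t:ℂ)) ^ (c-b-1)) *
        ((ascPochhammer ℂ k).eval a * ((z*t : ℝ):ℂ) ^ k / k.factorial)) = fun k => F k t := by
      funext k
      simp only [hFdef]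
      rw [hsplit k t ht0]
      push_cast [mul_pow]
      ring
    rw [heq] at hmul
    rw [hmul.tsum_eq]
    push_cast
    ring
  -- each integral is a beta integral
  have hint : ∀ k, (∫ t in Ioo (0:ℝ) 1, F k t) =
      (ascPochhammer ℂ k).eval a / k.factorial * (z:ℂ) ^ k *
        Complex.betaIntegral (b + k) (c - b) := by
    intro k
    have hbval : Complex.betaIntegral (b + k) (c - b)
        = ∫ t in Ioo (0:ℝ) 1, (t:ℂ) ^ (b + k - 1) * ((1:ℂ) - (t:ℂ)) ^ (c - b - 1) := by
      rw [Complex.betaIntegral, intervalIntegral.integral_of_le zero_le_one,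
        MeasureTheory.integral_Ioc_eq_integral_Ioo]
    rw [hbval, hFdef]
    simp only
    rw [MeasureTheory.integral_const_mul]
  -- pochhammer nonvanishing for c
  have hGc : Complex.Gamma c ≠ 0 := Complex.Gamma_ne_zero_of_re_pos hc0
  have hGb : Complex.Gamma b ≠ 0 := Complex.Gamma_ne_zero_of_re_pos hb
  have hGcb : Complex.Gamma (c - b) ≠ 0 := Complex.Gamma_ne_zero_of_re_pos hcb
  have hGck : ∀ k : ℕ, Complex.Gamma (c + k) ≠ 0 := by
    intro k
    apply Complex.Gamma_ne_zero_of_re_pos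
    simp only [Complex.add_re, Complex.natCast_re]
    positivity
  have hpc : ∀ k : ℕ, (ascPochhammer ℂ k).eval c ≠ 0 := by
    intro k h
    exact hGck k (by rw [Gamma_add_nat' c hc0 k, h, zero_mul])
  -- value of beta integral
  have hbetaval : ∀ k : ℕ, Complex.betaIntegral (b + k) (c - b) =
      (ascPochhammer ℂ k).eval b * Complex.Gamma b * Complex.Gamma (c - b) /
        ((ascPochhammer ℂ k).eval c * Complex.Gamma c) := by
    intro k
    have h2 := Complex.Gamma_mul_Gamma_eq_betaIntegral (hrebk k) hcb
    have h3 : b + (k:ℂ) + (c - b) = c + k := by ring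
    rw [h3, Gamma_add_nat' c hc0 k, Gamma_add_nat' b hb k] at h2
    rw [eq_div_iff (mul_ne_zero (hpc k) hGc)]
    linear_combination (-1 : ℂ) * h2
  -- assembly
  have hfinal := hhs.mul_left (Complex.Gamma c / (Complex.Gamma b * Complex.Gamma (c - b)))
  have hterm : (fun k => Complex.Gamma c / (Complex.Gamma b * Complex.Gamma (c - b)) *
      (∫ t in Ioo (0:ℝ) 1, F k t)) =
      fun k => (ascPochhammer ℂ k).eval a * (ascPochhammer ℂ k).eval b /
        ((ascPochhammer ℂ k).eval c * (k.factorial : ℂ)) * (z:ℂ) ^ k := by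
    funext k
    rw [hint k, hbetaval k]
    have hfk : ((k.factorial : ℕ):ℂ) ≠ 0 := Nat.cast_ne_zero.mpr k.factorial_ne_zero
    field_simp [hpc k, hGb, hGc, hGcb, hfk]
  rw [hterm] at hfinal
  have hRHS : (∫ t in (0:ℝ)..1, (t:ℂ) ^ (b-1) * ((1:ℂ) - (t:ℂ)) ^ (c-b-1) *
      ((1:ℂ) - (z:ℂ) * (t:ℂ)) ^ (-a)) = ∫ t in Ioo (0:ℝ) 1, ∑' k, F k t := by
    rw [intervalIntegral.integral_of_le zero_le_one,
      MeasureTheory.integral_Ioc_eq_integral_Ioo]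
    exact setIntegral_congr_fun measurableSet_Ioo (fun t ht => (hpt t ht).symm)
  rw [hRHS]
  exact hfinal.tsum_eq
end

section
/- For a finite field F_q with char p > 2, multiplicative characters A₁,...,A_{n+1}, B₂,...,B_{n+1}, and t ∈ F_q^×: ₙ₊₁P_n[A₁,...,A_{n+1}; B₂,...,B_{n+1} | 1/t] = A₁(-t) (Π_{i=2}^{n+1} A_iB_i(-1)) · ₙ₊₁P_n[A₁, A₁B̄₂,...,A₁B̄_{n+1}; A₁Ā₂,...,A₁Ā_{n+1} | t]. -/
open Finset

variable {F : Type*} [Field F] [Fintype F]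

/-- Greene's normalized binomial coefficient `(A choose B) = B(-1)/q · J(A, B⁻¹)`. -/
noncomputable def greeneBinom (A B : MulChar F ℂ) : ℂ :=
  B (-1) / (Fintype.card F : ℂ) * jacobiSum A B⁻¹

/-- The period function `ₙ₊₁P_n` of Fuselier et al., with numerator characters
`A 0, ..., A n` and denominator characters `B 0, ..., B (n-1)` (representing
`B₂, ..., B_{n+1}`). -/
noncomputable def periodP (n : ℕ) (A : Fin (n + 1) → MulChar F ℂ)
    (B : Fin n → MulChar F ℂ) (z : F) : ℂ :=
  (Fintype.card F : ℂ) ^ (n + 1) / ((Fintype.card F : ℂ) - 1) *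
    (∏ i : Fin n, (A i.succ * B i) (-1)) *
    ∑ᶠ χ : MulChar F ℂ,
      (greeneBinom (A 0 * χ) χ * ∏ i : Fin n, greeneBinom (A i.succ * χ) (B i * χ)) * χ z

lemma mulChar_sq_neg_one (A : MulChar F ℂ) : A (-1) * A (-1) = 1 := by
  rw [← map_mul, neg_mul_neg, mul_one, map_one]

lemma mulChar_inv_neg_one (A : MulChar F ℂ) : A⁻¹ (-1) = A (-1) := by
  rw [MulChar.inv_apply', inv_neg, inv_one]

lemma greeneBinom_symm (A B : MulChar F ℂ) :
    greeneBinom A B = A (-1) * B (-1) * greeneBinom B⁻¹ A⁻¹ := by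
  unfold greeneBinom
  rw [inv_inv, jacobiSum_comm B⁻¹ A, mulChar_inv_neg_one]
  have h := mulChar_sq_neg_one A
  set q := (Fintype.card F : ℂ)
  linear_combination (- (B (-1) / q * jacobiSum A B⁻¹)) * h

lemma greeneBinom_inv_inv (X Y : MulChar F ℂ) :
    greeneBinom X⁻¹ Y⁻¹ = X (-1) * Y (-1) * greeneBinom Y X := by
  rw [greeneBinom_symm, inv_inv, inv_inv, mulChar_inv_neg_one, mulChar_inv_neg_one]

/-- Transformation formula of Li et al.: for `char F > 2` and `t ≠ 0`,
`ₙ₊₁P_n[A₁,…,A_{n+1}; B₂,…,B_{n+1} | 1/t]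
  = A₁(-t) ∏(A_iB_i)(-1) · ₙ₊₁P_n[A₁, A₁B̄₂,…,A₁B̄_{n+1}; A₁Ā₂,…,A₁Ā_{n+1} | t]`. -/
theorem periodP_transformation (hchar : 2 < ringChar F) (n : ℕ)
    (A : Fin (n + 1) → MulChar F ℂ) (B : Fin n → MulChar F ℂ) (t : F) (ht : t ≠ 0) :
    periodP n A B t⁻¹ =
      (A 0) (-t) * (∏ i : Fin n, (A i.succ * B i) (-1)) *
        periodP n (Fin.cases (A 0) (fun i => A 0 * (B i)⁻¹))
          (fun i => A 0 * (A i.succ)⁻¹) t := by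
  unfold periodP
  simp only [Fin.cases_zero, Fin.cases_succ]
  set q := (Fintype.card F : ℂ) with hq
  set s := ∏ i : Fin n, (A i.succ * B i) (-1) with hs
  have hs' : (∏ i : Fin n, (A 0 * (B i)⁻¹ * (A 0 * (A i.succ)⁻¹)) (-1)) = s := by
    rw [hs]
    refine Finset.prod_congr rfl fun i _ => ?_
    simp only [MulChar.mul_apply, mulChar_inv_neg_one]
    linear_combination ((B i) (-1) * (A i.succ) (-1)) * mulChar_sq_neg_one (A 0)
  have key : ∀ ψ : MulChar F ℂ,
      ((greeneBinom (A 0 * (A 0 * ψ)⁻¹) ((A 0 * ψ)⁻¹) *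
          ∏ i : Fin n, greeneBinom (A i.succ * (A 0 * ψ)⁻¹) (B i * (A 0 * ψ)⁻¹)) *
        (A 0 * ψ)⁻¹ t⁻¹)
      = (A 0 (-1) * s * A 0 t) *
        ((greeneBinom (A 0 * ψ) ψ *
            ∏ i : Fin n, greeneBinom (A 0 * (B i)⁻¹ * ψ) (A 0 * (A i.succ)⁻¹ * ψ)) * ψ t) := by
    intro ψ
    have h1 : A 0 * (A 0 * ψ)⁻¹ = ψ⁻¹ := by rw [mul_inv, mul_inv_cancel_left]
    have h0 : greeneBinom (A 0 * (A 0 * ψ)⁻¹) ((A 0 * ψ)⁻¹) =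
        A 0 (-1) * greeneBinom (A 0 * ψ) ψ := by
      rw [h1, greeneBinom_inv_inv]
      simp only [MulChar.mul_apply]
      linear_combination (greeneBinom (A 0 * ψ) ψ * A 0 (-1)) * mulChar_sq_neg_one ψ
    have hfac : ∀ i : Fin n,
        greeneBinom (A i.succ * (A 0 * ψ)⁻¹) (B i * (A 0 * ψ)⁻¹) =
        (A i.succ * B i) (-1) *
          greeneBinom (A 0 * (B i)⁻¹ * ψ) (A 0 * (A i.succ)⁻¹ * ψ) := by
      intro i
      have hX : A i.succ * (A 0 * ψ)⁻¹ = (A 0 * (A i.succ)⁻¹ * ψ)⁻¹ := by simp [mul_inv, inv_inv, mul_comm, mul_left_comm, mul_assoc]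
      have hY : B i * (A 0 * ψ)⁻¹ = (A 0 * (B i)⁻¹ * ψ)⁻¹ := by simp [mul_inv, inv_inv, mul_comm, mul_left_comm, mul_assoc]
      rw [hX, hY, greeneBinom_inv_inv]
      simp only [MulChar.mul_apply, mulChar_inv_neg_one]
      linear_combination
        (greeneBinom (A 0 * (B i)⁻¹ * ψ) (A 0 * (A i.succ)⁻¹ * ψ) *
          (A i.succ (-1) * B i (-1) * A 0 (-1) * A 0 (-1))) * mulChar_sq_neg_one ψ +
        (greeneBinom (A 0 * (B i)⁻¹ * ψ) (A 0 * (A i.succ)⁻¹ * ψ) *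
          (A i.succ (-1) * B i (-1))) * mulChar_sq_neg_one (A 0)
    have ht' : ((A 0 * ψ)⁻¹) t⁻¹ = A 0 t * ψ t := by
      rw [MulChar.inv_apply', inv_inv, MulChar.mul_apply]
    rw [h0, ht', Finset.prod_congr rfl (fun i _ => hfac i), Finset.prod_mul_distrib, ← hs]
    ring
  have hbij : Function.Bijective (fun ψ : MulChar F ℂ => (A 0 * ψ)⁻¹) := by
    constructor
    · intro a b h
      exact mul_left_cancel (inv_injective h)
    · intro χ
      exact ⟨(A 0)⁻¹ * χ⁻¹, by simp [mul_inv, inv_inv, mul_comm, mul_left_comm, mul_assoc]⟩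
  have hsum : (∑ᶠ χ : MulChar F ℂ,
      (greeneBinom (A 0 * χ) χ * ∏ i : Fin n, greeneBinom (A i.succ * χ) (B i * χ)) * χ t⁻¹)
      = (A 0 (-1) * s * A 0 t) * ∑ᶠ ψ : MulChar F ℂ,
        (greeneBinom (A 0 * ψ) ψ *
          ∏ i : Fin n, greeneBinom (A 0 * (B i)⁻¹ * ψ) (A 0 * (A i.succ)⁻¹ * ψ)) * ψ t := by
    rw [mul_finsum _ _, ← finsum_comp (fun ψ : MulChar F ℂ => (A 0 * ψ)⁻¹) hbij]
    exact finsum_congr key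
  rw [hsum, hs']
  have hAt : A 0 (-t) = A 0 (-1) * A 0 t := by rw [← map_mul, neg_one_mul]
  rw [hAt]
  ring
end

section
/- Let p ≡ 1 (mod 6) be prime and ω̄_p the inverse Teichmüller character of F_p. Then for r ∈ {1/2, 1/3, 1/6}, the Jacobi sum congruence A_r((p-1)r) ≡ -J(ω̄_p^{(p-1)r}, ω̄_p^{(p-1)(2/3-r)}) (mod p) holds, where A_r(k) = (r+1/3)_k/k! and J denotes the Jacobi sum over F_p. -/
open Finset

-- L1: pochhammer at u/6
private lemma poch_six (u : ℚ) (k : ℕ) :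
    (6:ℚ)^k * (ascPochhammer ℚ k).eval (u/6) = ∏ i ∈ range k, (u + 6*i) := by
  induction k with
  | zero => simp
  | succ n ih =>
    rw [ascPochhammer_succ_eval, prod_range_succ, ← ih, pow_succ]
    ring

-- L2: power sums over ZMod p
private lemma sum_pow_zmod (p : ℕ) [Fact p.Prime] {n : ℕ} (hn : 0 < n) :
    ∑ x : ZMod p, x ^ n = if (p - 1) ∣ n then -1 else 0 := by
  classical
  let φ : (ZMod p)ˣ ↪ ZMod p := ⟨Units.val, Units.val_injective⟩
  have hmap : (univ : Finset (ZMod p)ˣ).map φ = univ \ {0} := by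
    ext x
    simpa only [mem_map, mem_univ, Function.Embedding.coeFn_mk, true_and, mem_sdiff,
      mem_singleton, φ] using (show (∃ a : (ZMod p)ˣ, (a : ZMod p) = x) ↔ x ≠ 0 from isUnit_iff_ne_zero)
  have h1 : ∑ x : ZMod p, x ^ n = ∑ x ∈ (univ \ {0} : Finset (ZMod p)), x ^ n := by
    rw [eq_comm]
    refine Finset.sum_subset (Finset.sdiff_subset) (fun x _ hx => ?_)
    have hx0 : x = 0 := by simpa using hx
    simp [hx0, zero_pow hn.ne']
  rw [h1, ← hmap, Finset.sum_map]
  have h2 := FiniteField.sum_pow_units (ZMod p) n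
  rw [ZMod.card] at h2
  simpa [φ] using h2

private lemma main_sum (p t k l : ℕ) [Fact p.Prime] (ht : p = 6*t+1) (ht1 : 1 ≤ t)
    (hk1 : 1 ≤ k) (hl1 : 1 ≤ l) (hkl : k + l = 4*t) :
    ∑ x : ZMod p, x ^ (6*t - k) * (1 - x) ^ (6*t - l)
      = -((-1)^k * ((6*t - l).choose k : ZMod p)) := by
  have hk4 : k ≤ 4*t - 1 := by omega
  have hl4 : l ≤ 4*t - 1 := by omega
  set a := 6*t - k with ha
  set b := 6*t - l with hb
  have hconv : ∀ x : ZMod p, (1-x)^b = ∑ j ∈ range (b+1), (-1)^j * (b.choose j) * x^j := by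
    intro x
    rw [show (1 - x) = -x + 1 by ring, add_pow]
    refine Finset.sum_congr rfl (fun j _ => ?_)
    rw [neg_pow]
    ring
  calc ∑ x : ZMod p, x^a*(1-x)^b
      = ∑ x : ZMod p, ∑ j ∈ range (b+1), (-1)^j * (b.choose j) * x^(a+j) := by
        refine Finset.sum_congr rfl (fun x _ => ?_)
        rw [hconv x, Finset.mul_sum]
        refine Finset.sum_congr rfl (fun j _ => ?_)
        rw [pow_add]
        ring
    _ = ∑ j ∈ range (b+1), (-1)^j * (b.choose j) * ∑ x : ZMod p, x^(a+j) := by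
        rw [Finset.sum_comm]
        exact Finset.sum_congr rfl (fun j _ => by rw [Finset.mul_sum])
    _ = ∑ j ∈ range (b+1), (-1)^j * (b.choose j) *
          (if (p-1) ∣ (a+j) then (-1 : ZMod p) else 0) := by
        refine Finset.sum_congr rfl (fun j _ => ?_)
        rw [sum_pow_zmod p (by omega)]
    _ = -((-1)^k * ((6*t - l).choose k : ZMod p)) := by
        rw [Finset.sum_eq_single k]
        · rw [if_pos (by rw [show p - 1 = 6*t by omega]; exact ⟨1, by omega⟩)]
          ring
        · intro j hj hjk
          rw [if_neg, mul_zero]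
          rintro ⟨d, hd⟩
          have hjb : j ≤ b := by simpa using Nat.lt_succ_iff.mp (Finset.mem_range.mp hj)
          have hp1 : p - 1 = 6*t := by omega
          rw [hp1] at hd
          -- a + j ∈ [2t+1, 8t], so d = 1, j = k
          rcases Nat.lt_or_ge d 2 with h2 | h2
          · interval_cases d <;> omega
          · have h3 : 6*t*2 ≤ 6*t*d := Nat.mul_le_mul_left _ h2
            omega
        · intro hk
          exact absurd (Finset.mem_range.mpr (by omega)) hk

private lemma toZMod_omega (p : ℕ) [Fact p.Prime] (ω : MulChar (ZMod p) ℤ_[p])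
    (hω : ∀ x : ZMod p, ω x - (x.val : ℤ_[p]) ∈ Ideal.span {(p : ℤ_[p])}) (x : ZMod p) :
    PadicInt.toZMod (ω x) = x := by
  have h := hω x
  rw [← PadicInt.maximalIdeal_eq_span_p, ← PadicInt.ker_toZMod, RingHom.mem_ker, map_sub,
    sub_eq_zero] at h
  rw [h, map_natCast, ZMod.natCast_val, ZMod.cast_id]

private lemma char_pow_eval (p : ℕ) [Fact p.Prime] (ω : MulChar (ZMod p) ℤ_[p])
    (hω : ∀ x : ZMod p, ω x - (x.val : ℤ_[p]) ∈ Ideal.span {(p : ℤ_[p])})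
    {n : ℕ} (hn1 : 1 ≤ n) (hn2 : n ≤ p - 2) (x : ZMod p) :
    ((ω⁻¹ ^ n).ringHomComp PadicInt.toZMod) x = x ^ (p - 1 - n) := by
  have hp2 : 2 ≤ p := (Fact.out : p.Prime).two_le
  rw [MulChar.ringHomComp_apply, MulChar.pow_apply' _ (by omega) x, MulChar.inv_apply' ,
    map_pow, toZMod_omega p ω hω]
  rcases eq_or_ne x 0 with rfl | hx
  · rw [inv_zero, zero_pow (by omega), zero_pow (by omega)]
  · have hx1 : x ^ (p-1) = 1 := ZMod.pow_card_sub_one_eq_one hx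
    have : x ^ (p - 1 - n) * x ^ n = 1 := by
      rw [← pow_add, show p - 1 - n + n = p - 1 by omega, hx1]
    rw [inv_pow]
    exact (eq_inv_of_mul_eq_one_left this).symm

private lemma key (p t m k l : ℕ) [Fact p.Prime]
    (ω : MulChar (ZMod p) ℤ_[p])
    (hω : ∀ x : ZMod p, ω x - (x.val : ℤ_[p]) ∈ Ideal.span {(p : ℤ_[p])})
    (ht : p = 6*t+1) (ht1 : 1 ≤ t) (hm1 : 1 ≤ m) (hm3 : m ≤ 3)
    (hkv : k = m*t) (hlv : l = (4-m)*t) :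
    ‖((((∏ i ∈ range k, (m + 2 + 6*i) : ℕ) : ℚ) / ((6^k * k.factorial : ℕ) : ℚ) : ℚ) : ℚ_[p]) +
        ((jacobiSum (ω⁻¹ ^ k) (ω⁻¹ ^ l) : ℤ_[p]) : ℚ_[p])‖ ≤ ((p : ℝ))⁻¹ := by
  have hp : p.Prime := Fact.out
  have hp2 : 2 ≤ p := hp.two_le
  set J := jacobiSum (ω⁻¹ ^ k) (ω⁻¹ ^ l) with hJdef
  set N : ℕ := ∏ i ∈ range k, (m + 2 + 6*i) with hNdef
  set q : ℕ := 6^k * k.factorial with hqdef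
  -- arithmetic facts
  have h4 : m + (4-m) = 4 := by omega
  have hkl : k + l = 4*t := by rw [hkv, hlv, ← Nat.add_mul, h4]
  have hk3t : k ≤ 3*t := by rw [hkv]; exact Nat.mul_le_mul_right t hm3
  have hl3t : l ≤ 3*t := by rw [hlv]; exact Nat.mul_le_mul_right t (by omega)
  have hk1 : 1 ≤ k := by rw [hkv]; simpa using Nat.mul_le_mul hm1 ht1
  have hl1 : 1 ≤ l := by rw [hlv]; simpa using Nat.mul_le_mul (show 1 ≤ 4-m by omega) ht1
  have hkp : k ≤ p - 2 := by omega
  have hlp : l ≤ p - 2 := by omega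
  have hbval : l + (2+m)*t = 6*t := by
    rw [hlv, ← Nat.add_mul]
    congr 1
    omega
  set b : ℕ := 6*t - l with hbdef
  have hb' : b = (2+m)*t := by omega
  have hkb : k ≤ b := by
    have : m*t ≤ (2+m)*t := Nat.mul_le_mul_right t (by omega)
    omega
  have h6b : 6*b = (m+2)*(p-1) := by
    rw [hb', show p - 1 = 6*t by omega]
    ring
  -- Jacobi sum reduction
  have hJ : PadicInt.toZMod J = -((-1)^k * (b.choose k : ZMod p)) := by
    rw [hJdef, ← jacobiSum_ringHomComp]
    have : jacobiSum ((ω⁻¹^k).ringHomComp PadicInt.toZMod) ((ω⁻¹^l).ringHomComp PadicInt.toZMod)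
        = ∑ x : ZMod p, x ^ (6*t - k) * (1 - x) ^ (6*t - l) := by
      refine Finset.sum_congr rfl (fun x _ => ?_)
      rw [char_pow_eval p ω hω hk1 hkp x, char_pow_eval p ω hω hl1 hlp (1-x),
        show p - 1 - k = 6*t - k by omega, show p - 1 - l = 6*t - l by omega]
    rw [this, main_sum p t k l ht ht1 hk1 hl1 hkl]
  -- value of N mod p
  have hcast : ((6*b : ℕ) : ZMod p) = -((m : ZMod p) + 2) := by
    rw [h6b]
    push_cast [Nat.cast_sub (show 1 ≤ p by omega)]
    rw [ZMod.natCast_self]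
    ring
  have h6bz : (6 : ZMod p) * (b : ZMod p) = -((m : ZMod p) + 2) := by
    rw [← hcast]; push_cast; ring
  have hNval : ((N : ℕ) : ZMod p) = (-1)^k * 6^k * ((b.descFactorial k : ℕ) : ZMod p) := by
    have h1 : ((N:ℕ) : ZMod p) = ∏ i ∈ range k, ((m : ZMod p) + 2 + 6*(i:ZMod p)) := by
      rw [hNdef]
      push_cast
      rfl
    have h2 : ∏ _i ∈ range k, (-6 : ZMod p) = (-1)^k * 6^k := by
      rw [Finset.prod_const, Finset.card_range, show (-6 : ZMod p) = -1 * 6 by ring, mul_pow]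
    rw [h1, Nat.descFactorial_eq_prod_range, Nat.cast_prod, ← h2, ← Finset.prod_mul_distrib]
    refine Finset.prod_congr rfl (fun i hi => ?_)
    have hib : i ≤ b := le_trans (Nat.le_of_lt_succ (Nat.lt_succ_of_lt (Finset.mem_range.mp hi))) hkb
    rw [Nat.cast_sub hib]
    linear_combination h6bz
  -- the integer combination is divisible by p
  have hzero : PadicInt.toZMod ((N : ℤ_[p]) + (q : ℤ_[p]) * J) = 0 := by
    rw [map_add, map_mul, map_natCast, map_natCast, hJ, hNval,
      show (b.descFactorial k : ℕ) = k.factorial * b.choose k from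
        Nat.descFactorial_eq_factorial_mul_choose b k, hqdef]
    push_cast
    ring
  -- norm estimates
  set w : ℤ_[p] := (N : ℤ_[p]) + (q : ℤ_[p]) * J with hwdef
  have hw : ‖w‖ ≤ ((p:ℝ))⁻¹ := by
    have hmem : w ∈ Ideal.span {(p : ℤ_[p])^1} := by
      rw [pow_one, ← PadicInt.maximalIdeal_eq_span_p, ← PadicInt.ker_toZMod, RingHom.mem_ker]
      exact hzero
    have h := (PadicInt.norm_le_pow_iff_mem_span_pow w 1).mpr hmem
    simpa using h
  have hq0 : 0 < q := by positivity
  have hpq : ¬ p ∣ q := by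
    intro hdvd
    rcases (Nat.Prime.dvd_mul hp).mp hdvd with h | h
    · have := hp.dvd_of_dvd_pow h
      have : p ≤ 6 := Nat.le_of_dvd (by norm_num) this
      omega
    · have := (Nat.Prime.dvd_factorial hp).mp h
      omega
  have hqnorm : ‖((q:ℕ) : ℚ_[p])‖ = 1 := by
    have h1 : ‖((q:ℕ) : ℤ_[p])‖ ≤ 1 := PadicInt.norm_le_one _
    have h2 : ¬ ‖((q:ℤ) : ℤ_[p])‖ < 1 := by
      rw [PadicInt.norm_int_lt_one_iff_dvd]
      exact_mod_cast hpq
    have h3 : ‖((q:ℕ) : ℤ_[p])‖ = 1 := by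
      push_cast at h2
      exact le_antisymm h1 (not_lt.mp h2)
    rw [show ((q:ℕ) : ℚ_[p]) = (((q:ℕ) : ℤ_[p]) : ℚ_[p]) by push_cast; ring,
      PadicInt.padic_norm_e_of_padicInt]
    exact h3
  have hqQ : ((q:ℕ):ℚ) ≠ 0 := by positivity
  have hqX : ((q:ℕ) : ℚ_[p]) * ((((N : ℚ) / ((q:ℕ) : ℚ) : ℚ) : ℚ_[p]) + (J : ℚ_[p]))
      = ((w : ℤ_[p]) : ℚ_[p]) := by
    rw [hwdef, mul_add]
    push_cast
    have hq0' : (((q:ℕ) : ℚ) : ℚ_[p]) ≠ 0 := by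
      rw [Rat.cast_ne_zero]
      exact hqQ
    field_simp
    exact mul_div_cancel_left₀ _ (Nat.cast_ne_zero.mpr hq0.ne')
  calc ‖(((N : ℚ) / ((q:ℕ) : ℚ) : ℚ) : ℚ_[p]) + (J : ℚ_[p])‖
      = ‖((q:ℕ) : ℚ_[p])‖ * ‖(((N : ℚ) / ((q:ℕ) : ℚ) : ℚ) : ℚ_[p]) + (J : ℚ_[p])‖ := by
        rw [hqnorm, one_mul]
    _ = ‖((q:ℕ) : ℚ_[p]) * ((((N : ℚ) / ((q:ℕ) : ℚ) : ℚ) : ℚ_[p]) + (J : ℚ_[p]))‖ := by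
        rw [norm_mul]
    _ = ‖((w : ℤ_[p]) : ℚ_[p])‖ := by rw [hqX]
    _ = ‖w‖ := PadicInt.padic_norm_e_of_padicInt w
    _ ≤ ((p:ℝ))⁻¹ := hw

/-- For a prime `p ≡ 1 (mod 6)`, the Teichmüller character `ω` of `F_p` (characterized
by `ω(x) ≡ x (mod p)` in `ℤ_p`), and `r ∈ {1/2, 1/3, 1/6}`, one has the congruence
`A_r((p-1)r) ≡ -J(ω̄^((p-1)r), ω̄^((p-1)(2/3-r))) (mod p)` in `ℤ_p`, where
`A_r(k) = (r+1/3)_k / k!`. The congruence is expressed in `ℚ_p` via the `p`-adic norm. -/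
theorem Ar_congruent_neg_jacobiSum (p : ℕ) [Fact p.Prime] (hp : p % 6 = 1)
    (ω : MulChar (ZMod p) ℤ_[p])
    (hω : ∀ x : ZMod p, ω x - (x.val : ℤ_[p]) ∈ Ideal.span {(p : ℤ_[p])})
    (r : ℚ) (hr : r ∈ ({1/2, 1/3, 1/6} : Set ℚ))
    (k l : ℕ) (hk : (k : ℚ) = ((p : ℚ) - 1) * r)
    (hl : (l : ℚ) = ((p : ℚ) - 1) * (2/3 - r)) :
    ‖((((ascPochhammer ℚ k).eval (r + 1/3) / (k.factorial : ℚ) : ℚ)) : ℚ_[p]) +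
        ((jacobiSum (ω⁻¹ ^ k) (ω⁻¹ ^ l) : ℤ_[p]) : ℚ_[p])‖ ≤ ((p : ℝ))⁻¹ := by
  have hpp : p.Prime := Fact.out
  have hp2 : 2 ≤ p := hpp.two_le
  obtain ⟨t, ht⟩ : ∃ t, p = 6*t+1 := ⟨p/6, by omega⟩
  have ht1 : 1 ≤ t := by omega
  have hpQ : ((p:ℚ)) - 1 = ((6*t : ℕ) : ℚ) := by rw [ht]; push_cast; ring
  have hfac : (k.factorial : ℚ) ≠ 0 := Nat.cast_ne_zero.mpr k.factorial_ne_zero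
  simp only [Set.mem_insert_iff, Set.mem_singleton_iff] at hr
  rcases hr with rfl | rfl | rfl
  · have hkv : k = 3*t := by
      have h : (k:ℚ) = ((3*t : ℕ):ℚ) := by rw [hk, hpQ]; push_cast; ring
      exact_mod_cast h
    have hlv : l = (4-3)*t := by
      have h : (l:ℚ) = ((1*t : ℕ):ℚ) := by rw [hl, hpQ]; push_cast; ring
      have h' : l = 1*t := by exact_mod_cast h
      omega
    have hA : (ascPochhammer ℚ k).eval (1/2 + 1/3) / (k.factorial:ℚ)
        = ((∏ i ∈ range k, (3 + 2 + 6*i) : ℕ) : ℚ) / ((6^k * k.factorial : ℕ) : ℚ) := by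
      have h := poch_six 5 k
      rw [show (1/2 + 1/3 : ℚ) = 5/6 by norm_num]
      push_cast
      rw [div_eq_div_iff hfac (by positivity)]
      linear_combination (k.factorial:ℚ) * h
    rw [hA]
    exact key p t 3 k l ω hω ht ht1 (by norm_num) (by norm_num) hkv hlv
  · have hkv : k = 2*t := by
      have h : (k:ℚ) = ((2*t : ℕ):ℚ) := by rw [hk, hpQ]; push_cast; ring
      exact_mod_cast h
    have hlv : l = (4-2)*t := by
      have h : (l:ℚ) = ((2*t : ℕ):ℚ) := by rw [hl, hpQ]; push_cast; ring
      have h' : l = 2*t := by exact_mod_cast h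
      omega
    have hA : (ascPochhammer ℚ k).eval (1/3 + 1/3) / (k.factorial:ℚ)
        = ((∏ i ∈ range k, (2 + 2 + 6*i) : ℕ) : ℚ) / ((6^k * k.factorial : ℕ) : ℚ) := by
      have h := poch_six 4 k
      rw [show (1/3 + 1/3 : ℚ) = 4/6 by norm_num]
      push_cast
      rw [div_eq_div_iff hfac (by positivity)]
      linear_combination (k.factorial:ℚ) * h
    rw [hA]
    exact key p t 2 k l ω hω ht ht1 (by norm_num) (by norm_num) hkv hlv
  · have hkv : k = 1*t := by
      have h : (k:ℚ) = ((1*t : ℕ):ℚ) := by rw [hk, hpQ]; push_cast; ring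
      exact_mod_cast h
    have hlv : l = (4-1)*t := by
      have h : (l:ℚ) = ((3*t : ℕ):ℚ) := by rw [hl, hpQ]; push_cast; ring
      have h' : l = 3*t := by exact_mod_cast h
      omega
    have hA : (ascPochhammer ℚ k).eval (1/6 + 1/3) / (k.factorial:ℚ)
        = ((∏ i ∈ range k, (1 + 2 + 6*i) : ℕ) : ℚ) / ((6^k * k.factorial : ℕ) : ℚ) := by
      have h := poch_six 3 k
      rw [show (1/6 + 1/3 : ℚ) = 3/6 by norm_num]
      push_cast
      rw [div_eq_div_iff hfac (by positivity)]
      linear_combination (k.factorial:ℚ) * h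
    rw [hA]
    exact key p t 1 k l ω hω ht ht1 (by norm_num) (by norm_num) hkv hlv
end

section
/- Let p ≡ 1 (mod 3) be prime, 0 < r < 2/3 with (p-1)r ∈ Z, and let ω̄_p be the inverse Teichmüller character. Then ω̄_p^{(p-1)(1-r)}(27) · J(ω̄_p^{(p-1)(1-r)}, ω̄_p^{(p-1)(r-2/3)}) ≡ 0 (mod p) in Z_p, i.e., the Jacobi sum J(ω̄_p^{(p-1)(1-r)}, ω_p^{(p-1)(2/3-r)}) is divisible by p. -/
open Finset

private lemma sum_pow_one_sub_pow (K : Type*) [Field K] [Fintype K] (a l : ℕ)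
    (h : a + l < Fintype.card K - 1) :
    ∑ x : K, x ^ a * (1 - x) ^ l = 0 := by
  have key : ∀ x : K, x ^ a * (1 - x) ^ l =
      ∑ j ∈ Finset.range (l + 1), ((-1) ^ j * (l.choose j) : K) * x ^ (a + j) := by
    intro x
    rw [sub_eq_add_neg, add_comm, add_pow, Finset.mul_sum]
    refine Finset.sum_congr rfl fun j hj => ?_
    rw [neg_pow, one_pow, pow_add]
    ring
  simp_rw [key]
  rw [Finset.sum_comm]
  refine Finset.sum_eq_zero fun j hj => ?_
  rw [← Finset.mul_sum, FiniteField.sum_pow_lt_card_sub_one, mul_zero]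
  have := Finset.mem_range.mp hj
  omega

/-- For a prime `p ≡ 1 (mod 3)`, the Teichmüller character `ω` of `F_p` (characterized
by `ω(x) ≡ x (mod p)` in `ℤ_p`), and `0 < r < 2/3` with `(p-1)r ∈ ℤ`, the quantity
`ω̄^((p-1)(1-r))(27) · J(ω̄^((p-1)(1-r)), ω^((p-1)(2/3-r)))` is divisible by `p` in `ℤ_p`;
in particular the Jacobi sum `J(ω̄^((p-1)(1-r)), ω^((p-1)(2/3-r)))` itself is divisible
by `p`. -/
theorem jacobiSum_divisible_by_p (p : ℕ) [Fact p.Prime] (hp : p % 3 = 1)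
    (ω : MulChar (ZMod p) ℤ_[p])
    (hω : ∀ x : ZMod p, ω x - (x.val : ℤ_[p]) ∈ Ideal.span {(p : ℤ_[p])})
    (r : ℚ) (hr0 : 0 < r) (hr23 : r < 2/3)
    (k l : ℕ) (hk : (k : ℚ) = ((p : ℚ) - 1) * (1 - r))
    (hl : (l : ℚ) = ((p : ℚ) - 1) * (2/3 - r)) :
    (ω⁻¹ ^ k) (27 : ZMod p) * jacobiSum (ω⁻¹ ^ k) (ω ^ l) ∈
        Ideal.span {(p : ℤ_[p])} ∧
      jacobiSum (ω⁻¹ ^ k) (ω ^ l) ∈ Ideal.span {(p : ℤ_[p])} := by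
  have hpp : p.Prime := Fact.out
  have hp2 : 2 ≤ p := hpp.two_le
  have hq1 : (1 : ℚ) < (p : ℚ) := by exact_mod_cast hp2
  have hcast : ((p : ℚ) - 1) = ((p - 1 : ℕ) : ℚ) := by
    rw [Nat.cast_sub (by omega)]; norm_num
  -- arithmetic facts about k and l
  have h3 : 3 * k = 3 * l + (p - 1) := by
    have hq : ((3 * k : ℕ) : ℚ) = ((3 * l + (p - 1) : ℕ) : ℚ) := by
      push_cast
      rw [hk, hl, ← hcast]
      ring
    exact_mod_cast hq
  have hkp : k < p - 1 := by
    have h1 : (k : ℚ) < ((p - 1 : ℕ) : ℚ) := by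
      rw [hk, ← hcast]
      nlinarith
    exact_mod_cast h1
  have hl0 : 0 < l := by
    have h1 : (0 : ℚ) < (l : ℚ) := by
      rw [hl]
      nlinarith
    exact_mod_cast h1
  have hk0 : 0 < k := by omega
  -- reduction mod p
  set f := (PadicInt.toZMod : ℤ_[p] →+* ZMod p) with hf
  have hmem : ∀ x : ℤ_[p], x ∈ Ideal.span {(p : ℤ_[p])} ↔ f x = 0 := by
    intro x
    rw [← PadicInt.maximalIdeal_eq_span_p, ← PadicInt.ker_toZMod, RingHom.mem_ker]
  have hχ : ∀ x : ZMod p, f (ω x) = x := by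
    intro x
    have h1 := (hmem _).mp (hω x)
    rw [map_sub, sub_eq_zero] at h1
    rw [h1, map_natCast]
    exact ZMod.natCast_rightInverse x
  have hj : f (jacobiSum (ω⁻¹ ^ k) (ω ^ l)) = 0 := by
    rw [← jacobiSum_ringHomComp]
    have e1 : ∀ x : ZMod p, ((ω⁻¹ ^ k).ringHomComp f) x = x ^ (p - 1 - k) := by
      intro x
      have h1 : ((ω⁻¹ ^ k).ringHomComp f) x = f ((ω⁻¹ ^ k) x) := rfl
      rw [h1, MulChar.pow_apply' _ hk0.ne', map_pow, MulChar.inv_apply, hχ]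
      rcases eq_or_ne x 0 with h0 | h0
      · rw [h0, Ring.inverse_zero, zero_pow hk0.ne', zero_pow (by omega : p - 1 - k ≠ 0)]
      · have hx1 : x ^ (p - 1) = 1 := ZMod.pow_card_sub_one_eq_one h0
        rw [Ring.inverse_eq_inv', inv_pow]
        refine inv_eq_of_mul_eq_one_left ?_
        rw [← pow_add, show p - 1 - k + k = p - 1 by omega, hx1]
    have e2 : ∀ x : ZMod p, ((ω ^ l).ringHomComp f) x = x ^ l := by
      intro x
      have h1 : ((ω ^ l).ringHomComp f) x = f ((ω ^ l) x) := rfl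
      rw [h1, MulChar.pow_apply' _ hl0.ne', map_pow, hχ]
    calc jacobiSum ((ω⁻¹ ^ k).ringHomComp f) ((ω ^ l).ringHomComp f)
        = ∑ x : ZMod p, x ^ (p - 1 - k) * (1 - x) ^ l := by
          rw [jacobiSum]
          exact Finset.sum_congr rfl fun x _ => by rw [e1, e2]
      _ = 0 := sum_pow_one_sub_pow _ _ _ (by rw [ZMod.card]; omega)
  have hj' : jacobiSum (ω⁻¹ ^ k) (ω ^ l) ∈ Ideal.span {(p : ℤ_[p])} := (hmem _).mpr hj
  exact ⟨Ideal.mul_mem_left _ _ hj', hj'⟩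
end
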